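/- (Deterministic core of Theorem 5.2) Let P and P' be two transition functions and π a policy on an episodic loop-free MDP. Suppose there exist a reference transition function P̄ and nonnegative radii ε(x,a) such that for every x ∈ X_s (s ≤ L−1) and a ∈ A, both Σ_{x'∈X_{s+1}} |P(x'|x,a) − P̄(x'|x,a)| ≤ ε(x,a) and Σ_{x'∈X_{s+1}} |P'(x'|x,a) − P̄(x'|x,a)| ≤ ε(x,a). Then Σ_{k=0}^{L−1} Σ_{x∈X_k} Σ_{a∈A} Σ_{x'∈X_{k+1}} | q^{P',π}(x,a,x') − q^{P,π}(x,a,x') | ≤ 2L·Σ_{s=0}^{L−1} Σ_{x∈X_s} Σ_{a∈A} q^{P,π}(x,a)·ε(x,a). -/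

import Mathlib

open Finset

/-- An episodic loop-free MDP: layers `X 0, …, X L` (encoded as an `ℕ`-indexed family of
types, so distinct layers are automatically disjoint), with `X 0` and `X L` singletons,
and a finite nonempty action set `A`. -/
structure LoopFreeMDP where
  L : ℕ
  hL : 1 ≤ L
  X : ℕ → Type
  instFintypeX : ∀ k, Fintype (X k)
  instDecEqX : ∀ k, DecidableEq (X k)
  nonemptyX : ∀ k, k ≤ L → Nonempty (X k)
  x0 : X 0
  hX0 : ∀ y : X 0, y = x0
  xL : X L
  hXL : ∀ y : X L, y = xL
  A : Type
  instFintypeA : Fintype A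
  instDecEqA : DecidableEq A
  instNonemptyA : Nonempty A

attribute [instance] LoopFreeMDP.instFintypeX LoopFreeMDP.instDecEqX
  LoopFreeMDP.instFintypeA LoopFreeMDP.instDecEqA LoopFreeMDP.instNonemptyA

namespace LoopFreeMDP

/-- The type of candidate transition functions. -/
abbrev TransKer (M : LoopFreeMDP) := ∀ k, M.X k → M.A → M.X (k + 1) → ℝ

/-- The type of candidate policies. -/
abbrev PolicyKer (M : LoopFreeMDP) := ∀ k, M.X k → M.A → ℝ

/-- `P` is a transition function: for every layer `k < L`, state and action,
`P (·|x,a)` is a probability vector on `X (k+1)`. -/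
def IsTransition (M : LoopFreeMDP) (P : M.TransKer) : Prop :=
  ∀ k, k < M.L → ∀ (x : M.X k) (a : M.A),
    (∀ x', 0 ≤ P k x a x') ∧ (∑ x', P k x a x' = 1)

/-- `π` is a policy: for every layer `k < L` and state, `π (·|x)` is a probability
vector on `A`. -/
def IsPolicy (M : LoopFreeMDP) (π : M.PolicyKer) : Prop :=
  ∀ k, k < M.L → ∀ x : M.X k,
    (∀ a, 0 ≤ π k x a) ∧ (∑ a, π k x a = 1)

/-- The state-visitation probabilities `μ_k`, defined layer by layer. -/
def mu (M : LoopFreeMDP) (P : M.TransKer) (π : M.PolicyKer) : ∀ k, M.X k → ℝ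
  | 0, _ => 1
  | k + 1, x' => ∑ x : M.X k, ∑ a : M.A, M.mu P π k x * π k x a * P k x a x'

/-- The occupancy measure `q^{P,π}(x,a,x') = μ_k(x)·π(a|x)·P(x'|x,a)`. -/
def occ (M : LoopFreeMDP) (P : M.TransKer) (π : M.PolicyKer)
    (k : ℕ) (x : M.X k) (a : M.A) (x' : M.X (k + 1)) : ℝ :=
  M.mu P π k x * π k x a * P k x a x'

end LoopFreeMDP

lemma LoopFreeMDP.mu_nonneg (M : LoopFreeMDP) (P : M.TransKer) (π : M.PolicyKer)
    (hP : M.IsTransition P) (hπ : M.IsPolicy π) :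
    ∀ k, k ≤ M.L → ∀ x : M.X k, 0 ≤ M.mu P π k x := by
  intro k
  induction k with
  | zero => intro _ x; simp [LoopFreeMDP.mu]
  | succ n ih =>
    intro hk x'
    have hn : n < M.L := Nat.lt_of_succ_le hk
    rw [LoopFreeMDP.mu]
    refine Finset.sum_nonneg fun x _ => Finset.sum_nonneg fun a _ => ?_
    exact mul_nonneg (mul_nonneg (ih hn.le x) ((hπ n hn x).1 a)) ((hP n hn x a).1 x')

/-- **Deterministic core of Theorem 5.2.** If two transition functions `P, P'` both lie in an
L1 confidence ball of radius `ε(x,a)` around a reference transition function `P̄`, then the L1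
distance between their occupancy measures (for any policy `π`) is at most
`2L·Σ_{s<L} Σ_{x,a} q^{P,π}(x,a)·ε(x,a)`. -/
theorem occupancy_confidence_L1_bound (M : LoopFreeMDP)
    (P P' Pbar : M.TransKer) (π : M.PolicyKer)
    (hP : M.IsTransition P) (hP' : M.IsTransition P') (hPbar : M.IsTransition Pbar)
    (hπ : M.IsPolicy π)
    (ε : ∀ k, M.X k → M.A → ℝ)
    (hε : ∀ k, k < M.L → ∀ (x : M.X k) (a : M.A), 0 ≤ ε k x a)
    (hPclose : ∀ k, k < M.L → ∀ (x : M.X k) (a : M.A),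
      ∑ x' : M.X (k + 1), |P k x a x' - Pbar k x a x'| ≤ ε k x a)
    (hP'close : ∀ k, k < M.L → ∀ (x : M.X k) (a : M.A),
      ∑ x' : M.X (k + 1), |P' k x a x' - Pbar k x a x'| ≤ ε k x a) :
    ∑ k ∈ Finset.range M.L, ∑ x : M.X k, ∑ a : M.A, ∑ x' : M.X (k + 1),
        |M.occ P' π k x a x' - M.occ P π k x a x'|
      ≤ 2 * (M.L : ℝ) * ∑ s ∈ Finset.range M.L, ∑ x : M.X s, ∑ a : M.A,
          (∑ x' : M.X (s + 1), M.occ P π s x a x') * ε s x a := by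
  classical
  set μ := M.mu P π with hμdef
  set μ' := M.mu P' π with hμ'def
  set e : ℕ → ℝ := fun s => ∑ x : M.X s, ∑ a : M.A, μ s x * π s x a * ε s x a with hedef
  set S : ℕ → ℝ := fun k => ∑ x : M.X k, ∑ a : M.A, ∑ x' : M.X (k + 1),
      |M.occ P' π k x a x' - M.occ P π k x a x'| with hSdef
  set D : ℕ → ℝ := fun k => ∑ x : M.X k, |μ' k x - μ k x| with hDdef
  have hμnn := M.mu_nonneg P π hP hπ
  have hμ'nn := M.mu_nonneg P' π hP' hπ
  -- combined closeness
  have hclose : ∀ k, k < M.L → ∀ (x : M.X k) (a : M.A),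
      ∑ x' : M.X (k + 1), |P' k x a x' - P k x a x'| ≤ 2 * ε k x a := by
    intro k hk x a
    calc ∑ x' : M.X (k + 1), |P' k x a x' - P k x a x'|
        ≤ ∑ x' : M.X (k + 1), (|P' k x a x' - Pbar k x a x'| + |Pbar k x a x' - P k x a x'|) := by
          refine Finset.sum_le_sum fun x' _ => ?_
          calc |P' k x a x' - P k x a x'|
              = |(P' k x a x' - Pbar k x a x') + (Pbar k x a x' - P k x a x')| := by ring_nf
            _ ≤ _ := abs_add_le _ _
      _ = (∑ x' : M.X (k + 1), |P' k x a x' - Pbar k x a x'|)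
          + ∑ x' : M.X (k + 1), |Pbar k x a x' - P k x a x'| := Finset.sum_add_distrib
      _ ≤ ε k x a + ε k x a := by
          refine add_le_add (hP'close k hk x a) ?_
          simpa [abs_sub_comm] using hPclose k hk x a
      _ = 2 * ε k x a := by ring
  -- e is nonnegative
  have henn : ∀ s, s < M.L → 0 ≤ e s := by
    intro s hs
    refine Finset.sum_nonneg fun x _ => Finset.sum_nonneg fun a _ => ?_
    exact mul_nonneg (mul_nonneg (hμnn s hs.le x) ((hπ s hs x).1 a)) (hε s hs x a)
  -- per-layer bound
  have hSbound : ∀ k, k < M.L → S k ≤ D k + 2 * e k := by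
    intro k hk
    have key : ∀ (x : M.X k) (a : M.A),
        ∑ x' : M.X (k + 1), |M.occ P' π k x a x' - M.occ P π k x a x'|
          ≤ |μ' k x - μ k x| * π k x a + μ k x * π k x a * (2 * ε k x a) := by
      intro x a
      have hπnn : 0 ≤ π k x a := (hπ k hk x).1 a
      calc ∑ x' : M.X (k + 1), |M.occ P' π k x a x' - M.occ P π k x a x'|
          ≤ ∑ x' : M.X (k + 1), (|μ' k x - μ k x| * π k x a * P' k x a x'
              + μ k x * π k x a * |P' k x a x' - P k x a x'|) := by
            refine Finset.sum_le_sum fun x' _ => ?_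
            have h1 : M.occ P' π k x a x' - M.occ P π k x a x'
                = (μ' k x - μ k x) * π k x a * P' k x a x'
                  + μ k x * π k x a * (P' k x a x' - P k x a x') := by
              simp only [LoopFreeMDP.occ, ← hμdef, ← hμ'def]; ring
            rw [h1]
            refine (abs_add_le _ _).trans (le_of_eq ?_)
            rw [abs_mul, abs_mul, abs_mul, abs_mul,
              abs_of_nonneg hπnn, abs_of_nonneg ((hP' k hk x a).1 x'),
              abs_of_nonneg (hμnn k hk.le x)]
        _ = |μ' k x - μ k x| * π k x a * (∑ x' : M.X (k + 1), P' k x a x')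
            + μ k x * π k x a * ∑ x' : M.X (k + 1), |P' k x a x' - P k x a x'| := by
            rw [Finset.sum_add_distrib, ← Finset.mul_sum, ← Finset.mul_sum]
        _ ≤ |μ' k x - μ k x| * π k x a * 1 + μ k x * π k x a * (2 * ε k x a) := by
            refine add_le_add (le_of_eq (by rw [(hP' k hk x a).2])) ?_
            exact mul_le_mul_of_nonneg_left (hclose k hk x a)
              (mul_nonneg (hμnn k hk.le x) hπnn)
        _ = |μ' k x - μ k x| * π k x a + μ k x * π k x a * (2 * ε k x a) := by ring
    calc S k ≤ ∑ x : M.X k, ∑ a : M.A,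
          (|μ' k x - μ k x| * π k x a + μ k x * π k x a * (2 * ε k x a)) :=
        Finset.sum_le_sum fun x _ => Finset.sum_le_sum fun a _ => key x a
      _ = ∑ x : M.X k, (|μ' k x - μ k x| * (∑ a : M.A, π k x a)
          + 2 * ∑ a : M.A, μ k x * π k x a * ε k x a) := by
          refine Finset.sum_congr rfl fun x _ => ?_
          rw [Finset.sum_add_distrib, ← Finset.mul_sum]
          congr 1
          rw [Finset.mul_sum]
          exact Finset.sum_congr rfl fun a _ => by ring
      _ = D k + 2 * e k := by
          simp only [hDdef, hedef]
          rw [Finset.sum_add_distrib, Finset.mul_sum]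
          refine congrArg₂ (· + ·) ?_ rfl
          exact Finset.sum_congr rfl fun x _ => by rw [(hπ k hk x).2, mul_one]
  -- D propagation
  have hDstep : ∀ k, D (k + 1) ≤ S k := by
    intro k
    calc D (k + 1) = ∑ x' : M.X (k + 1),
          |(∑ x : M.X k, ∑ a : M.A, (M.occ P' π k x a x' - M.occ P π k x a x'))| := by
          refine Finset.sum_congr rfl fun x' _ => ?_
          congr 1
          rw [show μ' (k + 1) x' = ∑ x : M.X k, ∑ a : M.A, M.occ P' π k x a x' from rfl,
            show μ (k + 1) x' = ∑ x : M.X k, ∑ a : M.A, M.occ P π k x a x' from rfl,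
            ← Finset.sum_sub_distrib]
          exact Finset.sum_congr rfl fun x _ => (Finset.sum_sub_distrib _ _).symm
      _ ≤ ∑ x' : M.X (k + 1), ∑ x : M.X k, ∑ a : M.A,
            |M.occ P' π k x a x' - M.occ P π k x a x'| := by
          refine Finset.sum_le_sum fun x' _ => ?_
          refine (Finset.abs_sum_le_sum_abs _ _).trans ?_
          exact Finset.sum_le_sum fun x _ => Finset.abs_sum_le_sum_abs _ _
      _ = S k := by
          rw [hSdef]
          rw [Finset.sum_comm]
          exact Finset.sum_congr rfl fun x _ => Finset.sum_comm
  -- induction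
  have hD0 : D 0 = 0 := by
    rw [hDdef]
    refine Finset.sum_eq_zero fun x _ => ?_
    simp [hμdef, hμ'def, LoopFreeMDP.mu]
  have hDbound : ∀ k, k ≤ M.L → D k ≤ 2 * ∑ s ∈ Finset.range k, e s := by
    intro k
    induction k with
    | zero => intro _; simp [hD0]
    | succ n ih =>
      intro hk
      have hn : n < M.L := Nat.lt_of_succ_le hk
      calc D (n + 1) ≤ S n := hDstep n
        _ ≤ D n + 2 * e n := hSbound n hn
        _ ≤ 2 * (∑ s ∈ Finset.range n, e s) + 2 * e n := by
            exact add_le_add_left (ih hn.le) _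
        _ = 2 * ∑ s ∈ Finset.range (n + 1), e s := by
            rw [Finset.sum_range_succ]; ring
  -- total E
  set E : ℝ := ∑ s ∈ Finset.range M.L, e s with hEdef
  have hsum : ∀ k, k < M.L → S k ≤ 2 * E := by
    intro k hk
    calc S k ≤ D k + 2 * e k := hSbound k hk
      _ ≤ 2 * (∑ s ∈ Finset.range k, e s) + 2 * e k := add_le_add_left (hDbound k hk.le) _
      _ = 2 * ∑ s ∈ Finset.range (k + 1), e s := by rw [Finset.sum_range_succ]; ring
      _ ≤ 2 * E := by
          rw [hEdef]
          refine mul_le_mul_of_nonneg_left ?_ (by norm_num)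
          refine Finset.sum_le_sum_of_subset_of_nonneg ?_ fun s hs _ => henn s (Finset.mem_range.mp hs)
          exact Finset.range_subset_range.mpr hk
  have hRHS : ∑ s ∈ Finset.range M.L, ∑ x : M.X s, ∑ a : M.A,
      (∑ x' : M.X (s + 1), M.occ P π s x a x') * ε s x a = E := by
    rw [hEdef]
    refine Finset.sum_congr rfl fun s hs => ?_
    have hsL : s < M.L := Finset.mem_range.mp hs
    refine Finset.sum_congr rfl fun x _ => Finset.sum_congr rfl fun a _ => ?_
    have : ∑ x' : M.X (s + 1), M.occ P π s x a x' = μ s x * π s x a := by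
      simp only [LoopFreeMDP.occ, ← hμdef, ← Finset.mul_sum, (hP s hsL x a).2, mul_one]
    rw [this]
  calc ∑ k ∈ Finset.range M.L, ∑ x : M.X k, ∑ a : M.A, ∑ x' : M.X (k + 1),
        |M.occ P' π k x a x' - M.occ P π k x a x'|
      = ∑ k ∈ Finset.range M.L, S k := rfl
    _ ≤ ∑ k ∈ Finset.range M.L, 2 * E :=
        Finset.sum_le_sum fun k hk => hsum k (Finset.mem_range.mp hk)
    _ = (M.L : ℝ) * (2 * E) := by rw [Finset.sum_const, Finset.card_range, nsmul_eq_mul]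
    _ = 2 * (M.L : ℝ) * E := by ring
    _ = _ := by rw [hRHS]
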